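/- Let U ⊆ ℂ be a bounded connected open set, and let W_n, W ⊆ U be connected open sets with 0 ∈ W_n for all n and 0 ∈ W. Assume (W_n) converges to W in the kernel sense, the set F associated to (W_n) and W has empty interior in ℂ, and the function p ↦ η_W(p) is continuous on W. Then η_{W_n} → η_W uniformly on every compact subset of W. (This is Theorem 1.8(2) of the paper for the trivial single-leaf nonsingular foliation of U.) -/

import Mathlib

open Filter Metric Topology Set

/-- The kernel of a sequence of open sets: the union over `n` of the connected
component containing `0` of the interior of `⋂ k ≥ n, W k`. -/
def seqKernel {X : Type*} [TopologicalSpace X] [Zero X] (W : ℕ → Set X) : Set X :=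
  ⋃ n, connectedComponentIn (interior (⋂ k, ⋂ (_ : n ≤ k), W k)) 0

/-- The set `F` associated to a sequence `(W n)` and a limit set `W₀`: points
outside `closure W₀` that are limits of points `p k ∈ W (n k) \ closure W₀`
along a strictly increasing sequence of indices. -/
def Fset {X : Type*} [TopologicalSpace X] (W : ℕ → Set X) (W₀ : Set X) : Set X :=
  {p | p ∉ closure W₀ ∧ ∃ nk : ℕ → ℕ, StrictMono nk ∧ ∃ pk : ℕ → X,
    (∀ k, pk k ∈ W (nk k) \ closure W₀) ∧ Tendsto pk atTop (nhds p)}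

/-- The modulus-of-uniformization function of a plane domain `Ω` (for the trivial
single-leaf foliation): the supremum of `|f'(0)|` over holomorphic maps
`f : 𝔻 → Ω` with `f 0 = p` (with `sSup ∅ = 0`). -/
noncomputable def eta (Ω : Set ℂ) (p : ℂ) : ℝ :=
  sSup {r : ℝ | ∃ f : ℂ → ℂ, DifferentiableOn ℂ f (ball (0 : ℂ) 1) ∧ f 0 = p ∧
    (∀ z ∈ ball (0 : ℂ) 1, f z ∈ Ω) ∧ r = ‖deriv f 0‖}

set_option maxHeartbeats 1000000

def etaSet (Ω : Set ℂ) (p : ℂ) : Set ℝ :=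
  {r : ℝ | ∃ f : ℂ → ℂ, DifferentiableOn ℂ f (ball (0 : ℂ) 1) ∧ f 0 = p ∧
    (∀ z ∈ ball (0 : ℂ) 1, f z ∈ Ω) ∧ r = ‖deriv f 0‖}

lemma eta_eq (Ω : Set ℂ) (p : ℂ) : eta Ω p = sSup (etaSet Ω p) := rfl

lemma etaSet_le {Ω : Set ℂ} {p : ℂ} {R : ℝ} (hΩ : Ω ⊆ ball (0:ℂ) R) :
    ∀ r ∈ etaSet Ω p, r ≤ 2 * R := by
  rintro r ⟨f, hf, hf0, hmaps, rfl⟩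
  have h0mem : (0:ℂ) ∈ ball (0:ℂ) 1 := by simp
  have hmapsTo : MapsTo f (ball (0:ℂ) 1) (ball (f 0) (2*R)) := by
    intro z hz
    have h1 : f z ∈ ball (0:ℂ) R := hΩ (hmaps z hz)
    have h2 : f 0 ∈ ball (0:ℂ) R := hΩ (hmaps 0 h0mem)
    rw [mem_ball] at h1 h2 ⊢
    have := dist_triangle (f z) (0:ℂ) (f 0)
    rw [dist_comm (0:ℂ) (f 0)] at this
    linarith
  have := Complex.norm_deriv_le_div_of_mapsTo_ball hf (hmapsTo.mono_right ball_subset_closedBall) one_pos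
  simpa using this

lemma etaSet_bddAbove {Ω : Set ℂ} {p : ℂ} {R : ℝ} (hΩ : Ω ⊆ ball (0:ℂ) R) :
    BddAbove (etaSet Ω p) := ⟨2*R, etaSet_le hΩ⟩

lemma zero_mem_etaSet {Ω : Set ℂ} {p : ℂ} (hp : p ∈ Ω) : (0:ℝ) ∈ etaSet Ω p := by
  refine ⟨fun _ => p, differentiableOn_const _, rfl, fun _ _ => hp, ?_⟩
  simp

lemma eta_nonneg {Ω : Set ℂ} {p : ℂ} {R : ℝ} (hΩ : Ω ⊆ ball (0:ℂ) R) (hp : p ∈ Ω) :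
    0 ≤ eta Ω p :=
  le_csSup (etaSet_bddAbove hΩ) (zero_mem_etaSet hp)

lemma eta_le_two_mul {Ω : Set ℂ} {p : ℂ} {R : ℝ} (hR : 0 ≤ R) (hΩ : Ω ⊆ ball (0:ℂ) R) :
    eta Ω p ≤ 2 * R := by
  rcases eq_empty_or_nonempty (etaSet Ω p) with h | h
  · rw [eta_eq, h, Real.sSup_empty]; positivity
  · exact csSup_le h (etaSet_le hΩ)

lemma le_eta {Ω : Set ℂ} {p : ℂ} {R : ℝ} (hΩ : Ω ⊆ ball (0:ℂ) R) {r : ℝ}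
    (hr : r ∈ etaSet Ω p) : r ≤ eta Ω p :=
  le_csSup (etaSet_bddAbove hΩ) hr

lemma exists_etaSet_lt {Ω : Set ℂ} {p : ℂ} {b : ℝ} (hne : (etaSet Ω p).Nonempty)
    (hb : b < eta Ω p) : ∃ r ∈ etaSet Ω p, b < r :=
  exists_lt_of_lt_csSup hne hb

lemma etaSet_nonempty_of_pos {Ω : Set ℂ} {p : ℂ} (h : 0 < eta Ω p) :
    (etaSet Ω p).Nonempty := by
  by_contra hc
  rw [Set.not_nonempty_iff_eq_empty] at hc
  rw [eta_eq, hc, Real.sSup_empty] at h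
  exact lt_irrefl _ h

lemma compact_subset_eventually {W : ℕ → Set ℂ} {W₀ : Set ℂ}
    (hker : seqKernel W = W₀) {C : Set ℂ} (hC : IsCompact C) (hCW : C ⊆ W₀) :
    ∃ N, ∀ n, N ≤ n → C ⊆ W n := by
  set V : ℕ → Set ℂ := fun n => connectedComponentIn (interior (⋂ k, ⋂ (_ : n ≤ k), W k)) 0
    with hV
  have hVopen : ∀ n, IsOpen (V n) := fun n => isOpen_interior.connectedComponentIn
  have hVmono : Monotone V := by
    intro m n hmn
    apply connectedComponentIn_mono
    apply interior_mono
    intro x hx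
    simp only [Set.mem_iInter] at hx ⊢
    intro k hk
    exact hx k (hmn.trans hk)
  have hcover : C ⊆ ⋃ n, V n := by rw [← seqKernel, hker]; exact hCW
  obtain ⟨t, ht⟩ := hC.elim_finite_subcover V hVopen hcover
  rcases t.eq_empty_or_nonempty with rfl | htne
  · refine ⟨0, fun n _ => ?_⟩
    intro x hx
    simpa using ht hx
  · obtain ⟨N, hN⟩ := t.exists_le
    refine ⟨N, fun n hn x hx => ?_⟩
    obtain ⟨i, hi, hxi⟩ := by simpa using ht hx
    have hxV : x ∈ V n := hVmono ((hN i hi).trans hn) hxi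
    have : x ∈ ⋂ k, ⋂ (_ : n ≤ k), W k :=
      interior_subset (connectedComponentIn_subset _ _ hxV)
    simp only [Set.mem_iInter] at this
    exact this n le_rfl

lemma subset_seqKernel {W : ℕ → Set ℂ} {O : Set ℂ} (hO : IsOpen O)
    (hOconn : IsPreconnected O) (h0O : (0:ℂ) ∈ O) {N : ℕ}
    (hsub : ∀ k, N ≤ k → O ⊆ W k) : O ⊆ seqKernel W := by
  have h1 : O ⊆ interior (⋂ k, ⋂ (_ : N ≤ k), W k) := by
    apply hO.subset_interior_iff.mpr
    intro x hx
    simp only [Set.mem_iInter]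
    exact fun k hk => hsub k hk hx
  have h2 : O ⊆ connectedComponentIn (interior (⋂ k, ⋂ (_ : N ≤ k), W k)) 0 :=
    hOconn.subset_connectedComponentIn h0O h1
  exact h2.trans (Set.subset_iUnion (fun n => connectedComponentIn (interior (⋂ k, ⋂ (_ : n ≤ k), W k)) (0:ℂ)) N)

lemma deriv_bound_on_closedBall {f : ℂ → ℂ} {R r : ℝ}
    (hf : DifferentiableOn ℂ f (ball (0:ℂ) 1))
    (hb : ∀ z ∈ ball (0:ℂ) 1, ‖f z‖ ≤ R) (hr0 : 0 ≤ r) (hr1 : r < 1) :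
    ∀ z ∈ closedBall (0:ℂ) r, ‖deriv f z‖ ≤ R / ((1 - r)/2) := by
  intro z hz
  set ρ : ℝ := (1 - r)/2 with hρ
  have hρpos : 0 < ρ := by rw [hρ]; linarith
  have hsub : closedBall z ρ ⊆ ball (0:ℂ) 1 := by
    intro w hw
    rw [mem_closedBall] at hw
    rw [mem_ball]
    have hz' : dist z 0 ≤ r := mem_closedBall.mp hz
    calc dist w 0 ≤ dist w z + dist z 0 := dist_triangle _ _ _
      _ ≤ ρ + r := add_le_add hw hz'
      _ < 1 := by rw [hρ]; linarith
  have hdc : DiffContOnCl ℂ f (ball z ρ) := by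
    constructor
    · exact hf.mono ((ball_subset_closedBall).trans hsub)
    · rw [closure_ball z hρpos.ne']
      exact hf.continuousOn.mono hsub
  exact Complex.norm_deriv_le_of_forall_mem_sphere_norm_le hρpos hdc
    (fun w hw => hb w (hsub (sphere_subset_closedBall hw)))

lemma lip_on_closedBall {f : ℂ → ℂ} {R r : ℝ}
    (hf : DifferentiableOn ℂ f (ball (0:ℂ) 1))
    (hb : ∀ z ∈ ball (0:ℂ) 1, ‖f z‖ ≤ R) (hr0 : 0 ≤ r) (hr1 : r < 1) :
    ∀ x ∈ closedBall (0:ℂ) r, ∀ y ∈ closedBall (0:ℂ) r,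
      ‖f x - f y‖ ≤ (R / ((1 - r)/2)) * ‖x - y‖ := by
  have hconv : Convex ℝ (closedBall (0:ℂ) r) := convex_closedBall _ _
  have hsub : closedBall (0:ℂ) r ⊆ ball (0:ℂ) 1 := by
    intro w hw
    rw [mem_closedBall] at hw
    rw [mem_ball]
    linarith
  intro x hx y hy
  exact hconv.norm_image_sub_le_of_norm_deriv_le
    (fun w hw => (hf.differentiableAt (isOpen_ball.mem_nhds (hsub hw))))
    (fun w hw => deriv_bound_on_closedBall hf hb hr0 hr1 w hw) hy hx

lemma montel_subseq {r R L : ℝ} (hr0 : 0 ≤ r) (hrR : 0 ≤ L) (F : ℕ → ℂ → ℂ)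
    (hb : ∀ k, ∀ z ∈ closedBall (0:ℂ) r, ‖F k z‖ ≤ R)
    (hlip : ∀ k, ∀ x ∈ closedBall (0:ℂ) r, ∀ y ∈ closedBall (0:ℂ) r,
      ‖F k x - F k y‖ ≤ L * ‖x - y‖) :
    ∃ φ : ℕ → ℕ, StrictMono φ ∧ ∃ f : ℂ → ℂ,
      TendstoUniformlyOn (fun k => F (φ k)) f atTop (closedBall (0:ℂ) r) := by
  classical
  set s : Set ℂ := closedBall (0:ℂ) r with hs
  have hsne : s.Nonempty := ⟨0, by simp [hs, hr0]⟩
  have : Nonempty ↥s := hsne.to_subtype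
  obtain ⟨u, hu⟩ := TopologicalSpace.exists_dense_seq ↥s
  set D : ℕ → ℂ := fun j => (u j : ℂ) with hD
  have hDmem : ∀ j, D j ∈ s := fun j => (u j).2
  -- the product space of values
  set T : Set (ℕ → ℂ) := Set.pi Set.univ (fun _ => closedBall (0:ℂ) R) with hT
  have hTcompact : IsCompact T := isCompact_univ_pi (fun _ => isCompact_closedBall _ _)
  have hmemT : ∀ k, (fun j => F k (D j)) ∈ T := by
    intro k
    rw [hT, Set.mem_univ_pi]
    intro j
    rw [mem_closedBall_zero_iff]
    exact hb k (D j) (hDmem j)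
  obtain ⟨g, hgT, φ, hφ, hconv⟩ := hTcompact.isSeqCompact hmemT
  have hptwise : ∀ j, Tendsto (fun k => F (φ k) (D j)) atTop (𝓝 (g j)) := by
    intro j
    have := (continuous_apply j).continuousAt.tendsto.comp hconv
    exact this
  refine ⟨φ, hφ, ?_⟩
  -- uniform Cauchy
  have hUC : UniformCauchySeqOn (fun k => F (φ k)) atTop s := by
    rw [Metric.uniformCauchySeqOn_iff]
    intro ε hε
    set δ : ℝ := ε / (4 * (L + 1)) with hδ
    have hδpos : 0 < δ := by positivity
    -- cover s by finitely many balls around the D j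
    have hcov : s ⊆ ⋃ j : ℕ, ball (D j) δ := by
      intro x hx
      have : ∃ j, dist (⟨x, hx⟩ : ↥s) (u j) < δ := by
        exact hu.exists_dist_lt (⟨x, hx⟩ : ↥s) hδpos
      obtain ⟨j, hj⟩ := this
      rw [Subtype.dist_eq] at hj
      exact Set.mem_iUnion.mpr ⟨j, by rwa [mem_ball]⟩
    obtain ⟨t, ht⟩ := (isCompact_closedBall (0:ℂ) r).elim_finite_subcover
      (fun j : ℕ => ball (D j) δ) (fun _ => isOpen_ball) hcov
    -- Cauchy at each D j for j ∈ t
    have hcauchy : ∀ j ∈ t, ∃ N, ∀ m ≥ N, ∀ n ≥ N,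
        dist (F (φ m) (D j)) (F (φ n) (D j)) < ε / 2 := by
      intro j _
      have := (hptwise j).cauchySeq
      rw [Metric.cauchySeq_iff] at this
      exact this (ε/2) (by positivity)
    choose! N hN using hcauchy
    refine ⟨t.sup N, fun m hm n hn x hx => ?_⟩
    obtain ⟨j, hjt, hxj⟩ := by simpa using ht hx
    have hDj : D j ∈ s := hDmem j
    have hd1 : dist (F (φ m) x) (F (φ m) (D j)) ≤ L * δ := by
      rw [dist_eq_norm]
      calc ‖F (φ m) x - F (φ m) (D j)‖ ≤ L * ‖x - D j‖ := hlip (φ m) x hx (D j) hDj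
        _ ≤ L * δ := by
            apply mul_le_mul_of_nonneg_left _ hrR
            rw [← dist_eq_norm]
            exact (mem_ball.mp hxj).le
    have hd2 : dist (F (φ n) (D j)) (F (φ n) x) ≤ L * δ := by
      rw [dist_eq_norm]
      calc ‖F (φ n) (D j) - F (φ n) x‖ ≤ L * ‖D j - x‖ := hlip (φ n) (D j) hDj x hx
        _ ≤ L * δ := by
            apply mul_le_mul_of_nonneg_left _ hrR
            rw [← dist_eq_norm, dist_comm]
            exact (mem_ball.mp hxj).le
    have hd3 : dist (F (φ m) (D j)) (F (φ n) (D j)) < ε / 2 :=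
      hN j hjt m (le_trans (Finset.le_sup hjt) hm) n (le_trans (Finset.le_sup hjt) hn)
    have hLδ : L * δ ≤ ε / 4 := by
      have hq : δ * (4 * (L + 1)) = ε := div_mul_cancel₀ _ (by positivity)
      nlinarith [hδpos.le]
    calc dist (F (φ m) x) (F (φ n) x)
        ≤ dist (F (φ m) x) (F (φ m) (D j)) + dist (F (φ m) (D j)) (F (φ n) (D j))
          + dist (F (φ n) (D j)) (F (φ n) x) := dist_triangle4 _ _ _ _
      _ < ε/4 + ε/2 + ε/4 := by
          have := hd1.trans hLδ
          have := hd2.trans hLδ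
          linarith
      _ = ε := by ring
  -- pointwise limit
  have hpt : ∀ x ∈ s, ∃ c : ℂ, Tendsto (fun k => F (φ k) x) atTop (𝓝 c) := by
    intro x hx
    apply cauchySeq_tendsto_of_complete
    rw [Metric.cauchySeq_iff]
    intro ε hε
    rw [Metric.uniformCauchySeqOn_iff] at hUC
    obtain ⟨N, hN⟩ := hUC ε hε
    exact ⟨N, fun m hm n hn => hN m hm n hn x hx⟩
  choose! flim hflim using hpt
  exact ⟨flim, hUC.tendstoUniformlyOn_of_tendsto (fun x hx => hflim x hx)⟩

lemma eventually_ball_subset'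
    {G : ℕ → ℂ → ℂ} {f : ℂ → ℂ} {Ω : ℕ → Set ℂ} {r' r'' : ℝ}
    (hr'0 : 0 < r') (hr'r'' : r' < r'') (hr''1 : r'' < 1)
    (hGd : ∀ k, DifferentiableOn ℂ (G k) (ball (0:ℂ) 1))
    (hGmaps : ∀ k, ∀ w ∈ ball (0:ℂ) 1, G k w ∈ Ω k)
    (hunif : TendstoUniformlyOn G f atTop (closedBall (0:ℂ) r''))
    (hf0 : deriv f 0 ≠ 0)
    {z : ℂ} (hz : z ∈ ball (0:ℂ) r') :
    ∃ δ > 0, ∃ N, ∀ k, N ≤ k → ball (f z) δ ⊆ Ω k := by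
  have hr''0 : 0 < r'' := hr'0.trans hr'r''
  have hznorm : ‖z‖ < r' := by simpa [mem_ball, dist_eq_norm] using hz
  have hcb_sub : closedBall (0:ℂ) r'' ⊆ ball (0:ℂ) 1 := by
    intro w hw
    rw [mem_closedBall, dist_zero_right] at hw
    rw [mem_ball, dist_zero_right]
    linarith
  have hfa_cont : ContinuousOn f (closedBall (0:ℂ) r'') := by
    apply hunif.continuousOn
    exact (Eventually.of_forall fun k => (hGd k).continuousOn.mono hcb_sub).frequently
  have hfd : DifferentiableOn ℂ f (ball (0:ℂ) r'') := by
    have h1 : TendstoLocallyUniformlyOn G f atTop (ball (0:ℂ) r'') :=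
      hunif.tendstoLocallyUniformlyOn.mono ball_subset_closedBall
    exact h1.differentiableOn
      (Eventually.of_forall fun k => (hGd k).mono (fun w hw =>
        hcb_sub (ball_subset_closedBall hw))) isOpen_ball
  have hzball : z ∈ ball (0:ℂ) r'' := by
    rw [mem_ball, dist_zero_right]; linarith
  have h0ball : (0:ℂ) ∈ ball (0:ℂ) r'' := by
    rw [mem_ball, dist_zero_right]; simpa using hr''0
  set ρ₀ : ℝ := (r'' - ‖z‖) / 2 with hρ₀
  have hρ₀pos : 0 < ρ₀ := by rw [hρ₀]; linarith
  -- find a good radius ρ with f ≠ f z on the sphere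
  have hgood : ∃ ρ : ℝ, 0 < ρ ∧ ρ ≤ ρ₀ ∧ ∀ w ∈ sphere z ρ, f w ≠ f z := by
    by_contra hcon
    push_neg at hcon
    have hex : ∀ i : ℕ, ∃ w ∈ sphere z (ρ₀ / (i + 1)), f w = f z := by
      intro i
      have hpos : 0 < ρ₀ / (i + 1) := by positivity
      have hle : ρ₀ / (i + 1) ≤ ρ₀ := by
        apply div_le_self hρ₀pos.le
        push_cast; linarith [Nat.cast_nonneg (α := ℝ) i]
      obtain ⟨w, hw, hweq⟩ := hcon _ hpos hle
      exact ⟨w, hw, hweq⟩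
    choose w hwsphere hweq using hex
    have hwne : ∀ i, w i ≠ z := by
      intro i
      have := hwsphere i
      rw [mem_sphere] at this
      intro hcontra
      rw [hcontra, dist_self] at this
      have : (0:ℝ) < ρ₀ / (i+1) := by positivity
      simp_all
    have hwt : Tendsto w atTop (𝓝 z) := by
      rw [tendsto_iff_dist_tendsto_zero]
      have hdist : ∀ i, dist (w i) z = ρ₀ / (i+1) := fun i => (hwsphere i)
      simp_rw [hdist]
      exact tendsto_const_nhds.div_atTop (tendsto_natCast_atTop_atTop.atTop_add tendsto_const_nhds)
    have hwt' : Tendsto w atTop (𝓝[≠] z) := by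
      rw [tendsto_nhdsWithin_iff]
      exact ⟨hwt, Eventually.of_forall fun i => hwne i⟩
    have hfreq : ∃ᶠ x in 𝓝[≠] z, f x = f z := hwt'.frequently
      ((Eventually.of_forall hweq).frequently)
    have han : AnalyticOnNhd ℂ f (ball (0:ℂ) r'') := hfd.analyticOnNhd isOpen_ball
    have hconst : AnalyticOnNhd ℂ (fun _ => f z) (ball (0:ℂ) r'') :=
      fun x _ => analyticAt_const
    have heq : EqOn f (fun _ => f z) (ball (0:ℂ) r'') :=
      han.eqOn_of_preconnected_of_frequently_eq hconst
        (convex_ball _ _).isPreconnected hzball hfreq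
    have : deriv f 0 = 0 := by
      have hev : f =ᶠ[𝓝 (0:ℂ)] (fun _ => f z) :=
        heq.eventuallyEq_of_mem (isOpen_ball.mem_nhds h0ball)
      rw [hev.deriv_eq, deriv_const]
    exact hf0 this
  obtain ⟨ρ, hρpos, hρle, hρgood⟩ := hgood
  have hcball_sub : closedBall z ρ ⊆ ball (0:ℂ) r'' := by
    intro w hw
    rw [mem_closedBall] at hw
    rw [mem_ball, dist_zero_right]
    calc ‖w‖ = ‖w - z + z‖ := by ring_nf
      _ ≤ ‖w - z‖ + ‖z‖ := norm_add_le _ _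
      _ ≤ ρ + ‖z‖ := by rw [← dist_eq_norm]; exact add_le_add_left hw _
      _ ≤ ρ₀ + ‖z‖ := add_le_add_left hρle _
      _ < r'' := by rw [hρ₀]; linarith
  have hsphere_sub : sphere z ρ ⊆ closedBall (0:ℂ) r'' := fun w hw =>
    ball_subset_closedBall ((hcball_sub (sphere_subset_closedBall hw)))
  -- minimum of ‖f w - f z‖ on the sphere
  have hsne : (sphere z ρ).Nonempty := NormedSpace.sphere_nonempty.mpr hρpos.le
  obtain ⟨w₀, hw₀mem, hw₀min⟩ := (isCompact_sphere z ρ).exists_isMinOn hsne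
    ((continuous_norm.comp_continuousOn ((hfa_cont.mono hsphere_sub).sub continuousOn_const)))
  set ε₀ : ℝ := ‖f w₀ - f z‖ with hε₀
  have hε₀pos : 0 < ε₀ := by
    rw [hε₀, norm_pos_iff, sub_ne_zero]
    exact hρgood w₀ hw₀mem
  have hmin : ∀ w ∈ sphere z ρ, ε₀ ≤ ‖f w - f z‖ := fun w hw => hw₀min hw
  -- uniform closeness
  rw [Metric.tendstoUniformlyOn_iff] at hunif
  have hev := hunif (ε₀/8) (by positivity)
  rw [eventually_atTop] at hev
  obtain ⟨N, hN⟩ := hev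
  refine ⟨ε₀/8, by positivity, N, fun k hk => ?_⟩
  have hclose : ∀ x ∈ closedBall (0:ℂ) r'', dist (f x) (G k x) < ε₀/8 := hN k hk
  have hzmem'' : z ∈ closedBall (0:ℂ) r'' := ball_subset_closedBall hzball
  -- sphere lower bound for G k
  have hsphere_bd : ∀ w ∈ sphere z ρ, ε₀/2 ≤ ‖G k w - G k z‖ := by
    intro w hw
    have h1 : dist (f w) (G k w) < ε₀/8 := hclose w (hsphere_sub hw)
    have h2 : dist (f z) (G k z) < ε₀/8 := hclose z hzmem''
    have h3 : ε₀ ≤ dist (f w) (f z) := by rw [dist_eq_norm]; exact hmin w hw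
    have h4 : dist (f w) (f z) ≤ dist (f w) (G k w) + dist (G k w) (G k z)
        + dist (G k z) (f z) := dist_triangle4 _ _ _ _
    rw [dist_comm (G k z) (f z)] at h4
    rw [← dist_eq_norm]
    linarith
  -- G k is not locally constant at z
  have hz1 : z ∈ ball (0:ℂ) 1 := hcb_sub hzmem''
  have hfreqk : ∃ᶠ w in 𝓝 z, G k w ≠ G k z := by
    by_contra hcon
    rw [Filter.not_frequently] at hcon
    simp only [not_not] at hcon
    have hank : AnalyticOnNhd ℂ (G k) (ball (0:ℂ) 1) := (hGd k).analyticOnNhd isOpen_ball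
    have heqk : EqOn (G k) (fun _ => G k z) (ball (0:ℂ) 1) :=
      hank.eqOn_of_preconnected_of_eventuallyEq (fun x _ => analyticAt_const)
        (convex_ball _ _).isPreconnected hz1 hcon
    have hw₁ : z + ρ ∈ sphere z ρ := by
      simp [dist_eq_norm, abs_of_pos hρpos]
    have hw₁ball : (z + ρ : ℂ) ∈ ball (0:ℂ) 1 :=
      hcb_sub (hsphere_sub hw₁)
    have := hsphere_bd (z + ρ) hw₁
    rw [heqk hw₁ball] at this
    simp only [sub_self, norm_zero] at this
    linarith
  -- quantitative open mapping
  have hdck : DiffContOnCl ℂ (G k) (ball z ρ) := by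
    constructor
    · exact (hGd k).mono (fun w hw => hcb_sub (ball_subset_closedBall
        (hcball_sub (ball_subset_closedBall hw))))
    · rw [closure_ball z hρpos.ne']
      exact (hGd k).continuousOn.mono (fun w hw => hcb_sub (ball_subset_closedBall
        (hcball_sub hw)))
  have himg : ball (G k z) (ε₀/2/2) ⊆ G k '' closedBall z ρ :=
    hdck.ball_subset_image_closedBall hρpos hsphere_bd hfreqk
  have himgΩ : G k '' closedBall z ρ ⊆ Ω k := by
    rintro _ ⟨w, hw, rfl⟩
    exact hGmaps k w (hcb_sub (ball_subset_closedBall (hcball_sub hw)))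
  intro y hy
  apply himgΩ
  apply himg
  rw [mem_ball] at hy ⊢
  have h2 : dist (f z) (G k z) < ε₀/8 := hclose z hzmem''
  calc dist y (G k z) ≤ dist y (f z) + dist (f z) (G k z) := dist_triangle _ _ _
    _ < ε₀/8 + ε₀/8 := add_lt_add hy h2
    _ ≤ ε₀/2/2 := by linarith

lemma image_subset_limit
    {Ω : ℕ → Set ℂ} {W₀ : Set ℂ} (hW₀open : IsOpen W₀) (hW₀conn : IsConnected W₀)
    (h0W₀ : (0:ℂ) ∈ W₀) (hker : seqKernel Ω = W₀)
    {G : ℕ → ℂ → ℂ} {f : ℂ → ℂ} {r' r'' : ℝ}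
    (hr'0 : 0 < r') (hr'r'' : r' < r'') (hr''1 : r'' < 1)
    (hGd : ∀ k, DifferentiableOn ℂ (G k) (ball (0:ℂ) 1))
    (hGmaps : ∀ k, ∀ w ∈ ball (0:ℂ) 1, G k w ∈ Ω k)
    (hunif : TendstoUniformlyOn G f atTop (closedBall (0:ℂ) r''))
    (hf0 : deriv f 0 ≠ 0) (hfp : f 0 ∈ W₀) :
    ∀ z₀ ∈ ball (0:ℂ) r', f z₀ ∈ W₀ := by
  intro z₀ hz₀
  have hr''0 : 0 < r'' := hr'0.trans hr'r''
  have hcb_sub : closedBall (0:ℂ) r'' ⊆ ball (0:ℂ) 1 := by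
    intro w hw
    rw [mem_closedBall, dist_zero_right] at hw
    rw [mem_ball, dist_zero_right]
    linarith
  have hfa_cont : ContinuousOn f (closedBall (0:ℂ) r'') :=
    hunif.continuousOn (Eventually.of_forall fun k => (hGd k).continuousOn.mono hcb_sub).frequently
  have hz₀norm : ‖z₀‖ < r' := by simpa [mem_ball, dist_eq_norm] using hz₀
  have hz₀nonneg : (0:ℝ) ≤ ‖z₀‖ := norm_nonneg _
  have hsmall_sub : closedBall (0:ℂ) ‖z₀‖ ⊆ ball (0:ℂ) r' := by
    intro w hw
    rw [mem_closedBall, dist_zero_right] at hw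
    rw [mem_ball, dist_zero_right]
    linarith
  have hsmall_sub'' : closedBall (0:ℂ) ‖z₀‖ ⊆ closedBall (0:ℂ) r'' := by
    apply closedBall_subset_closedBall; linarith
  -- C : image of the small closed ball
  set C : Set ℂ := f '' closedBall (0:ℂ) ‖z₀‖ with hC
  have hCcompact : IsCompact C :=
    (isCompact_closedBall _ _).image_of_continuousOn (hfa_cont.mono hsmall_sub'')
  have hCconn : IsPreconnected C :=
    (convex_closedBall (0:ℂ) ‖z₀‖).isPreconnected.image _ (hfa_cont.mono hsmall_sub'')
  have hpC : f 0 ∈ C := ⟨0, by simpa using hz₀nonneg, rfl⟩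
  have hz₀C : f z₀ ∈ C := ⟨z₀, by simp, rfl⟩
  -- C₂ : a path from 0 to f 0 in W₀
  have hpathconn : IsPathConnected W₀ :=
    hW₀open.isConnected_iff_isPathConnected.mp hW₀conn
  obtain ⟨γ, hγ⟩ := (hpathconn.joinedIn 0 h0W₀ (f 0) hfp)
  set C₂ : Set ℂ := Set.range γ with hC₂
  have hC₂compact : IsCompact C₂ := isCompact_range γ.continuous
  have hC₂conn : IsPreconnected C₂ := isPreconnected_range γ.continuous
  have hC₂W₀ : C₂ ⊆ W₀ := by rintro _ ⟨t, rfl⟩; exact hγ t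
  have h0C₂ : (0:ℂ) ∈ C₂ := ⟨0, γ.source⟩
  have hpC₂ : f 0 ∈ C₂ := ⟨1, γ.target⟩
  -- thickening of C₂ absorbed eventually
  obtain ⟨δ₂, hδ₂pos, hδ₂sub⟩ := hC₂compact.exists_thickening_subset_open hW₀open hC₂W₀
  have hT₂compact : IsCompact (cthickening (δ₂/2) C₂) := by
    apply Metric.isCompact_of_isClosed_isBounded isClosed_cthickening
    exact hC₂compact.isBounded.cthickening
  have hT₂W₀ : cthickening (δ₂/2) C₂ ⊆ W₀ := by
    refine (cthickening_subset_thickening' hδ₂pos (by linarith) C₂).trans hδ₂sub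
  obtain ⟨N₂, hN₂⟩ := compact_subset_eventually hker hT₂compact hT₂W₀
  -- B : the union
  set B : Set ℂ := C ∪ C₂ with hB
  have hBcompact : IsCompact B := hCcompact.union hC₂compact
  have hBconn : IsPreconnected B := IsPreconnected.union (f 0) hpC hpC₂ hCconn hC₂conn
  have h0B : (0:ℂ) ∈ B := Or.inr h0C₂
  -- each point of B has a good ball
  have hgood : ∀ q ∈ B, ∃ δ > 0, ∃ N, ∀ k, N ≤ k → ball q δ ⊆ Ω k := by
    intro q hq
    rcases hq with hq | hq
    · obtain ⟨y, hy, rfl⟩ := hq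
      exact eventually_ball_subset' hr'0 hr'r'' hr''1 hGd hGmaps hunif hf0 (hsmall_sub hy)
    · refine ⟨δ₂/2, by linarith, N₂, fun k hk y hy => ?_⟩
      apply hN₂ k hk
      apply mem_cthickening_of_dist_le y q (δ₂/2) C₂ hq
      exact (mem_ball.mp hy).le
  -- choose data and take a finite subcover
  choose! δq hδqpos Nq hNq using hgood
  have hcover : B ⊆ ⋃ q : ↥B, ball (q:ℂ) (δq q) := by
    intro x hx
    exact Set.mem_iUnion.mpr ⟨⟨x, hx⟩, mem_ball_self (hδqpos x hx)⟩
  obtain ⟨t, ht⟩ := hBcompact.elim_finite_subcover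
    (fun q : ↥B => ball (q:ℂ) (δq q)) (fun _ => isOpen_ball) hcover
  set O : Set ℂ := ⋃ i ∈ t, ball (i:ℂ) (δq i) with hO
  have hBO : B ⊆ O := ht
  have hOopen : IsOpen O := isOpen_biUnion (fun _ _ => isOpen_ball)
  set N₀ : ℕ := t.sup (fun i => Nq (i:ℂ)) with hN₀
  have hOsub : ∀ k, N₀ ≤ k → O ⊆ Ω k := by
    intro k hk x hx
    rw [hO, Set.mem_iUnion₂] at hx
    obtain ⟨i, hit, hxi⟩ := hx
    exact hNq (i:ℂ) i.2 k (le_trans (Finset.le_sup (f := fun i : ↥B => Nq (i:ℂ)) hit) hk) hxi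
  -- O is preconnected
  have hOconn : IsPreconnected O := by
    have h1 : O ∪ B = ⋃₀ ((fun i : ↥B => ball (i:ℂ) (δq i) ∪ B) '' ↑t) := by
      apply subset_antisymm
      · rintro x (hx | hx)
        · rw [hO, Set.mem_iUnion₂] at hx
          obtain ⟨i, hit, hxi⟩ := hx
          exact ⟨_, Set.mem_image_of_mem _ (Finset.mem_coe.mpr hit), Or.inl hxi⟩
        · obtain ⟨i, hit, _⟩ := Set.mem_iUnion₂.mp (ht hx)
          exact ⟨_, Set.mem_image_of_mem _ (Finset.mem_coe.mpr hit), Or.inr hx⟩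
      · rintro x ⟨s, ⟨i, hit, rfl⟩, hxs⟩
        rcases hxs with h | h
        · left
          rw [hO, Set.mem_iUnion₂]
          exact ⟨i, Finset.mem_coe.mp hit, h⟩
        · exact Or.inr h
    have h2 : IsPreconnected (O ∪ B) := by
      rw [h1]
      apply isPreconnected_sUnion (0:ℂ)
      · rintro s ⟨i, hit, rfl⟩
        exact Set.mem_union_right _ h0B
      · rintro s ⟨i, hit, rfl⟩
        apply IsPreconnected.union (i:ℂ)
        · exact mem_ball_self (hδqpos (i:ℂ) i.2)
        · exact i.2
        · exact (convex_ball _ _).isPreconnected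
        · exact hBconn
    rwa [Set.union_eq_self_of_subset_right hBO] at h2
  have hOkernel : O ⊆ W₀ := by
    rw [← hker]
    exact subset_seqKernel hOopen hOconn (hBO h0B) hOsub
  exact hOkernel (hBO (Or.inl hz₀C))

lemma deriv_scale_add {f : ℂ → ℂ} (hf : DifferentiableAt ℂ f 0) (a c : ℂ) :
    deriv (fun z => f (a * z) + c) 0 = a * deriv f 0 := by
  have h1 : HasDerivAt (fun z : ℂ => a * z) a 0 := by
    simpa using (hasDerivAt_id (0:ℂ)).const_mul a
  have h2 : HasDerivAt f (deriv f 0) (a * 0) := by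
    rw [mul_zero]; exact hf.hasDerivAt
  have h3 := h2.comp (0:ℂ) h1
  have h4 : HasDerivAt (fun z => f (a * z) + c) (deriv f 0 * a) 0 :=
    (h3 : HasDerivAt (fun z => f (a * z)) (deriv f 0 * a) 0).add_const c
  rw [h4.deriv]; ring

lemma lower_eventually {W : ℕ → Set ℂ} {W₀ : Set ℂ} {R : ℝ} (hR : 0 < R)
    (hWsub : ∀ n, W n ⊆ ball (0:ℂ) R) (hW₀sub : W₀ ⊆ ball (0:ℂ) R)
    (hW₀open : IsOpen W₀)
    (hker : seqKernel W = W₀)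
    (hcont : ContinuousOn (eta W₀) W₀)
    {K : Set ℂ} (hK : IsCompact K) (hKW₀ : K ⊆ W₀) {ε : ℝ} (hε : 0 < ε) :
    ∀ᶠ n in atTop, ∀ p ∈ K, eta W₀ p - ε < eta (W n) p := by
  -- the global shrinking factor
  set rr : ℝ := max (1 - ε / (24*R + 24)) 0 with hrr
  have hrr0 : 0 ≤ rr := le_max_right _ _
  have hrr1 : rr < 1 := by
    rw [hrr]
    apply max_lt _ one_pos
    have : 0 < ε / (24*R + 24) := by positivity
    linarith
  have hrrsub : 1 - rr ≤ ε / (24*R + 24) := by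
    rw [hrr]
    have := le_max_left (1 - ε / (24*R + 24)) 0
    linarith
  have hrrkey : (1 - rr) * (2*R) ≤ ε / 12 := by
    have h1 : (1 - rr) * (2*R) ≤ (ε / (24*R + 24)) * (2*R) :=
      mul_le_mul_of_nonneg_right hrrsub (by positivity)
    have h2 : (ε / (24*R + 24)) * (2*R) ≤ ε / 12 := by
      rw [div_mul_eq_mul_div, div_le_div_iff₀ (by positivity) (by norm_num)]
      nlinarith
    linarith
  -- per-point data
  have hper : ∀ p₀ ∈ K, ∃ δ > 0, ∃ N, ∀ n, N ≤ n → ∀ p ∈ K, dist p p₀ < δ →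
      eta W₀ p - ε < eta (W n) p := by
    intro p₀ hp₀
    have hp₀W₀ : p₀ ∈ W₀ := hKW₀ hp₀
    have hne : (etaSet W₀ p₀).Nonempty := ⟨0, zero_mem_etaSet hp₀W₀⟩
    obtain ⟨r, hrmem, hrgt⟩ := exists_etaSet_lt hne
      (show eta W₀ p₀ - ε/4 < eta W₀ p₀ by linarith)
    obtain ⟨f₀, hf₀d, hf₀0, hf₀maps, rfl⟩ := hrmem
    set d : ℝ := ‖deriv f₀ 0‖ with hd
    have hdnonneg : 0 ≤ d := norm_nonneg _
    have hdle : d ≤ 2*R := etaSet_le hW₀sub d ⟨f₀, hf₀d, hf₀0, hf₀maps, rfl⟩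
    have hrrd : eta W₀ p₀ - ε/3 < rr * d := by
      have h1 : rr * d = d - (1 - rr) * d := by ring
      have h2 : (1 - rr) * d ≤ (1 - rr) * (2*R) :=
        mul_le_mul_of_nonneg_left hdle (by linarith)
      have h3 : (1 - rr) * d ≤ ε/12 := h2.trans hrrkey
      linarith
    -- the compact image and its thickening
    have hcb1 : closedBall (0:ℂ) rr ⊆ ball (0:ℂ) 1 := by
      intro w hw
      rw [mem_closedBall, dist_zero_right] at hw
      rw [mem_ball, dist_zero_right]
      linarith
    set C₀ : Set ℂ := f₀ '' closedBall (0:ℂ) rr with hC₀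
    have hC₀compact : IsCompact C₀ :=
      (isCompact_closedBall _ _).image_of_continuousOn (hf₀d.continuousOn.mono hcb1)
    have hC₀W₀ : C₀ ⊆ W₀ := by
      rintro _ ⟨w, hw, rfl⟩
      exact hf₀maps w (hcb1 hw)
    obtain ⟨δ₀, hδ₀pos, hδ₀sub⟩ := hC₀compact.exists_thickening_subset_open hW₀open hC₀W₀
    have hT₀compact : IsCompact (cthickening (δ₀/2) C₀) :=
      Metric.isCompact_of_isClosed_isBounded isClosed_cthickening
        hC₀compact.isBounded.cthickening
    have hT₀W₀ : cthickening (δ₀/2) C₀ ⊆ W₀ :=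
      (cthickening_subset_thickening' hδ₀pos (by linarith) C₀).trans hδ₀sub
    obtain ⟨N, hN⟩ := compact_subset_eventually hker hT₀compact hT₀W₀
    -- continuity of eta W₀ at p₀
    have hcw : ContinuousWithinAt (eta W₀) W₀ p₀ := hcont p₀ hp₀W₀
    rw [Metric.continuousWithinAt_iff] at hcw
    obtain ⟨δ₁, hδ₁pos, hδ₁⟩ := hcw (ε/3) (by positivity)
    refine ⟨min (δ₀/2) δ₁, by positivity, N, fun n hn p hp hdist => ?_⟩
    have hpW₀ : p ∈ W₀ := hKW₀ hp
    have hetap : dist (eta W₀ p) (eta W₀ p₀) < ε/3 :=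
      hδ₁ hpW₀ (hdist.trans_le (min_le_right _ _))
    -- the competitor for W n
    set g : ℂ → ℂ := fun z => f₀ ((rr:ℂ) * z) + (p - p₀) with hg
    have hmapsTo : ∀ z ∈ ball (0:ℂ) 1, (rr:ℂ) * z ∈ closedBall (0:ℂ) rr := by
      intro z hz
      rw [mem_ball, dist_zero_right] at hz
      rw [mem_closedBall, dist_zero_right, norm_mul, Complex.norm_real,
        Real.norm_of_nonneg hrr0]
      nlinarith
    have hgd : DifferentiableOn ℂ g (ball (0:ℂ) 1) := by
      apply DifferentiableOn.add_const
      exact hf₀d.comp ((differentiable_id.const_mul _).differentiableOn)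
        (fun z hz => hcb1 (hmapsTo z hz))
    have hg0 : g 0 = p := by
      rw [hg]; simp [hf₀0]
    have hgmaps : ∀ z ∈ ball (0:ℂ) 1, g z ∈ W n := by
      intro z hz
      apply hN n hn
      apply mem_cthickening_of_dist_le (g z) (f₀ ((rr:ℂ)*z)) (δ₀/2) C₀
        ⟨(rr:ℂ)*z, hmapsTo z hz, rfl⟩
      rw [hg]
      rw [dist_eq_norm]
      simp only [add_sub_cancel_left]
      calc ‖p - p₀‖ = dist p p₀ := by rw [dist_eq_norm]
        _ ≤ δ₀/2 := (hdist.trans_le (min_le_left _ _)).le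
    have hgderiv : ‖deriv g 0‖ = rr * d := by
      rw [hg, deriv_scale_add (hf₀d.differentiableAt (isOpen_ball.mem_nhds (by simp))),
        norm_mul, Complex.norm_real, Real.norm_of_nonneg hrr0, hd]
    have hgmem : rr * d ∈ etaSet (W n) p := ⟨g, hgd, hg0, hgmaps, hgderiv.symm⟩
    have h5 : rr * d ≤ eta (W n) p := le_eta (hWsub n) hgmem
    have h6 : eta W₀ p - eta W₀ p₀ < ε/3 := by
      rw [Real.dist_eq] at hetap
      have := abs_lt.mp hetap
      linarith [this.1]
    linarith
  choose! δf hδfpos Nf hNf using hper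
  have hcover : K ⊆ ⋃ q : ↥K, ball (q:ℂ) (δf q) := fun x hx =>
    Set.mem_iUnion.mpr ⟨⟨x, hx⟩, mem_ball_self (hδfpos x hx)⟩
  obtain ⟨t, ht⟩ := hK.elim_finite_subcover
    (fun q : ↥K => ball (q:ℂ) (δf q)) (fun _ => isOpen_ball) hcover
  rw [eventually_atTop]
  refine ⟨t.sup (fun q => Nf (q:ℂ)), fun n hn p hp => ?_⟩
  obtain ⟨q, hqt, hpq⟩ := Set.mem_iUnion₂.mp (ht hp)
  exact hNf (q:ℂ) q.2 n (le_trans (Finset.le_sup (f := fun q : ↥K => Nf (q:ℂ)) hqt) hn)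
    p hp (mem_ball.mp hpq)

lemma upper_eventually {W : ℕ → Set ℂ} {W₀ : Set ℂ} {R : ℝ} (hR : 0 < R)
    (hWsub : ∀ n, W n ⊆ ball (0:ℂ) R) (hW₀sub : W₀ ⊆ ball (0:ℂ) R)
    (hW₀open : IsOpen W₀) (hW₀conn : IsConnected W₀) (h0W₀ : (0:ℂ) ∈ W₀)
    (hsub : ∀ σ : ℕ → ℕ, StrictMono σ → seqKernel (fun k => W (σ k)) = W₀)
    (hcont : ContinuousOn (eta W₀) W₀)
    {K : Set ℂ} (hK : IsCompact K) (hKW₀ : K ⊆ W₀) {ε : ℝ} (hε : 0 < ε) :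
    ∀ᶠ n in atTop, ∀ p ∈ K, eta (W n) p < eta W₀ p + ε := by
  by_contra hcon
  rw [Filter.not_eventually] at hcon
  have hfreq : ∃ᶠ n in atTop, ∃ p ∈ K, eta W₀ p + ε ≤ eta (W n) p := by
    apply hcon.mono
    intro n hn
    push_neg at hn
    obtain ⟨p, hp, hle⟩ := hn
    exact ⟨p, hp, hle⟩
  obtain ⟨φ₁, hφ₁, hφ₁prop⟩ := extraction_of_frequently_atTop hfreq
  choose p hpK hple using hφ₁prop
  obtain ⟨plim, hplimK, φ₂, hφ₂, hp₂⟩ := hK.tendsto_subseq hpK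
  -- choose competitors
  set q : ℕ → ℂ := fun k => p (φ₂ k) with hq
  have hq2 : ∀ k, eta W₀ (q k) + ε ≤ eta (W (φ₁ (φ₂ k))) (q k) := fun k => hple (φ₂ k)
  have hqK : ∀ k, q k ∈ K := fun k => hpK (φ₂ k)
  have hqW₀ : ∀ k, q k ∈ W₀ := fun k => hKW₀ (hqK k)
  have hGex : ∀ k, ∃ G : ℂ → ℂ, DifferentiableOn ℂ G (ball (0:ℂ) 1) ∧ G 0 = q k ∧
      (∀ z ∈ ball (0:ℂ) 1, G z ∈ W (φ₁ (φ₂ k))) ∧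
      eta W₀ (q k) + ε/2 < ‖deriv G 0‖ := by
    intro k
    have hpos : 0 < eta (W (φ₁ (φ₂ k))) (q k) := by
      have h1 : 0 ≤ eta W₀ (q k) := eta_nonneg hW₀sub (hqW₀ k)
      linarith [hq2 k]
    have hne := etaSet_nonempty_of_pos hpos
    obtain ⟨r, hrmem, hrgt⟩ := exists_etaSet_lt hne
      (show eta W₀ (q k) + ε/2 < eta (W (φ₁ (φ₂ k))) (q k) by linarith [hq2 k])
    obtain ⟨G, hGd, hG0, hGmaps, rfl⟩ := hrmem
    exact ⟨G, hGd, hG0, hGmaps, hrgt⟩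
  choose G hGd hG0 hGmaps hGder using hGex
  -- scales
  set T : ℝ := 2 * R with hT
  have hTpos : 0 < T := by rw [hT]; linarith
  set r' : ℝ := (T + ε) / (T + ε + ε/4) with hr'
  have hDpos : 0 < T + ε + ε/4 := by linarith
  have hr'0 : 0 < r' := by rw [hr']; positivity
  have hr'1 : r' < 1 := by
    rw [hr', div_lt_one hDpos]; linarith
  set r'' : ℝ := (1 + r') / 2 with hr''
  have hr'r'' : r' < r'' := by rw [hr'']; linarith
  have hr''1 : r'' < 1 := by rw [hr'']; linarith
  have hr''0 : 0 < r'' := hr'0.trans hr'r''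
  -- bounds for Montel
  have hGb : ∀ k, ∀ z ∈ ball (0:ℂ) 1, ‖G k z‖ ≤ R := by
    intro k z hz
    have := hWsub (φ₁ (φ₂ k)) (hGmaps k z hz)
    rw [mem_ball, dist_zero_right] at this
    exact this.le
  have hGb'' : ∀ k, ∀ z ∈ closedBall (0:ℂ) r'', ‖G k z‖ ≤ R := by
    intro k z hz
    apply hGb k
    rw [mem_closedBall, dist_zero_right] at hz
    rw [mem_ball, dist_zero_right]
    linarith
  set L : ℝ := R / ((1 - r'')/2) with hL
  have hLpos : 0 ≤ L := by
    rw [hL]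
    apply div_nonneg hR.le
    linarith
  have hGlip : ∀ k, ∀ x ∈ closedBall (0:ℂ) r'', ∀ y ∈ closedBall (0:ℂ) r'',
      ‖G k x - G k y‖ ≤ L * ‖x - y‖ :=
    fun k => lip_on_closedBall (hGd k) (hGb k) hr''0.le hr''1
  obtain ⟨φ₃, hφ₃, f, hunif⟩ := montel_subseq hr''0.le hLpos G hGb'' hGlip
  -- final subsequence data
  set ν : ℕ → ℕ := fun k => φ₁ (φ₂ (φ₃ k)) with hν
  have hνmono : StrictMono ν := hφ₁.comp (hφ₂.comp hφ₃)
  set G' : ℕ → ℂ → ℂ := fun k => G (φ₃ k) with hG'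
  set q' : ℕ → ℂ := fun k => q (φ₃ k) with hq'
  have hq'tend : Tendsto q' atTop (𝓝 plim) := hp₂.comp hφ₃.tendsto_atTop
  have hG'd : ∀ k, DifferentiableOn ℂ (G' k) (ball (0:ℂ) 1) := fun k => hGd (φ₃ k)
  have hG'maps : ∀ k, ∀ z ∈ ball (0:ℂ) 1, G' k z ∈ W (ν k) := fun k => hGmaps (φ₃ k)
  have hcb1 : closedBall (0:ℂ) r'' ⊆ ball (0:ℂ) 1 := by
    intro w hw
    rw [mem_closedBall, dist_zero_right] at hw
    rw [mem_ball, dist_zero_right]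
    linarith
  -- limit properties
  have h0r'' : (0:ℂ) ∈ ball (0:ℂ) r'' := by
    rw [mem_ball, dist_zero_right]; simpa using hr''0
  have hf0p : f 0 = plim := by
    have h1 : Tendsto (fun k => G' k 0) atTop (𝓝 (f 0)) :=
      hunif.tendsto_at (ball_subset_closedBall h0r'')
    have h2 : Tendsto (fun k => G' k 0) atTop (𝓝 plim) := by
      have : (fun k => G' k 0) = q' := by
        funext k; exact hG0 (φ₃ k)
      rw [this]; exact hq'tend
    exact tendsto_nhds_unique h1 h2
  have hTLU : TendstoLocallyUniformlyOn G' f atTop (ball (0:ℂ) r'') :=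
    hunif.tendstoLocallyUniformlyOn.mono ball_subset_closedBall
  have hfd : DifferentiableOn ℂ f (ball (0:ℂ) r'') :=
    hTLU.differentiableOn (Eventually.of_forall fun k =>
      (hG'd k).mono (fun w hw => hcb1 (ball_subset_closedBall hw))) isOpen_ball
  have hdconv : Tendsto (fun k => deriv (G' k) 0) atTop (𝓝 (deriv f 0)) := by
    have := hTLU.deriv (Eventually.of_forall fun k =>
      (hG'd k).mono (fun w hw => hcb1 (ball_subset_closedBall hw))) isOpen_ball
    exact this.tendsto_at h0r''
  have habsconv : Tendsto (fun k => ‖deriv (G' k) 0‖) atTop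
      (𝓝 (‖deriv f 0‖)) :=
    (continuous_norm.tendsto _).comp hdconv
  have hetaconv : Tendsto (fun k => eta W₀ (q' k)) atTop (𝓝 (eta W₀ plim)) := by
    have hca : ContinuousAt (eta W₀) plim :=
      hcont.continuousAt (hW₀open.mem_nhds (hKW₀ hplimK))
    exact hca.tendsto.comp hq'tend
  have hkey : eta W₀ plim + ε/2 ≤ ‖deriv f 0‖ := by
    have h1 : ∀ k, eta W₀ (q' k) + ε/2 ≤ ‖deriv (G' k) 0‖ :=
      fun k => (hGder (φ₃ k)).le
    exact le_of_tendsto_of_tendsto' (hetaconv.add_const (ε/2)) habsconv h1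
  have hetapos : 0 ≤ eta W₀ plim := eta_nonneg hW₀sub (hKW₀ hplimK)
  have hf0ne : deriv f 0 ≠ 0 := by
    intro hzero
    rw [hzero] at hkey
    simp only [norm_zero] at hkey
    linarith
  -- image of limit in W₀
  have himg : ∀ z₀ ∈ ball (0:ℂ) r', f z₀ ∈ W₀ := by
    apply image_subset_limit hW₀open hW₀conn h0W₀ (hsub ν hνmono) hr'0 hr'r'' hr''1
      hG'd hG'maps hunif hf0ne
    rw [hf0p]
    exact hKW₀ hplimK
  -- the final competitor for W₀
  set g : ℂ → ℂ := fun z => f ((r':ℂ) * z) + 0 with hgdef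
  have hmapsTo : ∀ z ∈ ball (0:ℂ) 1, (r':ℂ) * z ∈ ball (0:ℂ) r' := by
    intro z hz
    rw [mem_ball, dist_zero_right] at hz
    rw [mem_ball, dist_zero_right, norm_mul, Complex.norm_real,
      Real.norm_of_nonneg hr'0.le]
    nlinarith
  have hball_sub : ball (0:ℂ) r' ⊆ ball (0:ℂ) r'' := ball_subset_ball (by linarith)
  have hgd : DifferentiableOn ℂ g (ball (0:ℂ) 1) := by
    apply DifferentiableOn.add_const
    exact hfd.comp ((differentiable_id.const_mul _).differentiableOn)
      (fun z hz => hball_sub (hmapsTo z hz))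
  have hg0 : g 0 = plim := by rw [hgdef]; simpa using hf0p
  have hgmaps : ∀ z ∈ ball (0:ℂ) 1, g z ∈ W₀ := by
    intro z hz
    rw [hgdef]
    simpa using himg _ (hmapsTo z hz)
  have hgderiv : ‖deriv g 0‖ = r' * ‖deriv f 0‖ := by
    rw [hgdef, deriv_scale_add (hfd.differentiableAt (isOpen_ball.mem_nhds h0r'')),
      norm_mul, Complex.norm_real, Real.norm_of_nonneg hr'0.le]
  have hgmem : r' * ‖deriv f 0‖ ∈ etaSet W₀ plim :=
    ⟨g, hgd, hg0, hgmaps, hgderiv.symm⟩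
  have hfinal : r' * ‖deriv f 0‖ ≤ eta W₀ plim := le_eta hW₀sub hgmem
  -- derive contradiction
  set x : ℝ := eta W₀ plim with hx
  set d : ℝ := ‖deriv f 0‖ with hd
  have hxT : x ≤ T := by rw [hx, hT]; exact eta_le_two_mul hR.le hW₀sub
  have hr'mul : r' * (T + ε + ε/4) = T + ε := div_mul_cancel₀ _ (ne_of_gt hDpos)
  -- x ≥ r' * d, d ≥ x + ε/2, x ≤ T, 0 ≤ x
  nlinarith [hfinal, hkey, hxT, hetapos, hr'0, mul_le_mul_of_nonneg_left hxT hr'0.le,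
    mul_le_mul_of_nonneg_right hr'1.le (show (0:ℝ) ≤ x + ε/2 by linarith)]

/-- Theorem 1.8(2) for the trivial single-leaf foliation of a bounded plane
domain `U`: if `(W n)` converges to `W₀` in the kernel sense, the set `F` has
empty interior in `ℂ`, and `η_{W₀}` is continuous on `W₀`, then
`η_{W n} → η_{W₀}` uniformly on every compact subset of `W₀`. -/
theorem eta_uniform_convergence_of_kernel_convergence_F_empty_interior
    (U : Set ℂ) (hUopen : IsOpen U) (hUconn : IsConnected U)
    (hUbdd : Bornology.IsBounded U)
    (W : ℕ → Set ℂ) (W₀ : Set ℂ)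
    (hWopen : ∀ n, IsOpen (W n)) (hWconn : ∀ n, IsConnected (W n))
    (hWU : ∀ n, W n ⊆ U) (h0 : ∀ n, (0 : ℂ) ∈ W n)
    (hW₀open : IsOpen W₀) (hW₀conn : IsConnected W₀) (hW₀U : W₀ ⊆ U)
    (h0W₀ : (0 : ℂ) ∈ W₀)
    (hker : seqKernel W = W₀)
    (hsub : ∀ σ : ℕ → ℕ, StrictMono σ → seqKernel (fun k => W (σ k)) = W₀)
    (hF : interior (Fset W W₀) = ∅)
    (hcont : ContinuousOn (eta W₀) W₀) :
    ∀ K : Set ℂ, IsCompact K → K ⊆ W₀ →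
      TendstoUniformlyOn (fun n p => eta (W n) p) (fun p => eta W₀ p) atTop K := by
  obtain ⟨r₀, hr₀⟩ := hUbdd.subset_closedBall (0:ℂ)
  set R : ℝ := |r₀| + 1 with hRdef
  have hR : 0 < R := by positivity
  have hUball : U ⊆ ball (0:ℂ) R := by
    intro x hx
    have := hr₀ hx
    rw [mem_closedBall] at this
    rw [mem_ball]
    calc dist x 0 ≤ r₀ := this
      _ ≤ |r₀| := le_abs_self _
      _ < R := by rw [hRdef]; linarith
  have hWsub : ∀ n, W n ⊆ ball (0:ℂ) R := fun n => (hWU n).trans hUball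
  have hW₀sub : W₀ ⊆ ball (0:ℂ) R := hW₀U.trans hUball
  intro K hK hKW₀
  rw [Metric.tendstoUniformlyOn_iff]
  intro ε hε
  have hlow := lower_eventually hR hWsub hW₀sub hW₀open hker hcont hK hKW₀ hε
  have hup := upper_eventually hR hWsub hW₀sub hW₀open hW₀conn h0W₀ hsub hcont hK hKW₀ hε
  filter_upwards [hlow, hup] with n h1 h2 p hp
  rw [Real.dist_eq, abs_sub_lt_iff]
  constructor
  · linarith [h1 p hp]
  · linarith [h2 p hp]
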